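/- For every rational c ∉ {0, 1, −1}, the second dynatomic polynomial of φ_c(x) = ((c + c² − c³)x − c²)/((c³ − c² − c + 1)x² − (c³ − c² − c)x − c²) is a quadratic polynomial in x with nonzero discriminant; consequently, φ_c has either zero or exactly two rational points of exact period 2, and if it has one rational 2-periodic point then it has exactly two. -/

import Mathlib

noncomputable section
open Polynomial

/-- The quadratic rational map `φ_c` on `ℙ¹(ℚ) = ℚ ∪ {∞}` (`∞` encoded as `none`). -/
def phiC4 (c : ℚ) : Option ℚ → Option ℚ
  | none => some 0
  | some x =>
      if (c^3 - c^2 - c + 1)*x^2 - (c^3 - c^2 - c)*x - c^2 = 0 then none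
      else some (((c + c^2 - c^3)*x - c^2) /
        ((c^3 - c^2 - c + 1)*x^2 - (c^3 - c^2 - c)*x - c^2))

/-- Numerator of `φ_c`. -/
def N₁ (c : ℚ) : ℚ[X] := C (c + c^2 - c^3) * X - C (c^2)

/-- Denominator of `φ_c`. -/
def D₁ (c : ℚ) : ℚ[X] := C (c^3 - c^2 - c + 1) * X^2 - C (c^3 - c^2 - c) * X - C (c^2)

/-- Numerator of `φ_c²` (obtained by substituting `φ_c` into itself and clearing
denominators, using that the numerator of `φ_c` is linear). -/
def N₂ (c : ℚ) : ℚ[X] := D₁ c * (C (c + c^2 - c^3) * N₁ c + C (-c^2) * D₁ c)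

/-- Denominator of `φ_c²`. -/
def D₂ (c : ℚ) : ℚ[X] :=
  C (c^3 - c^2 - c + 1) * (N₁ c)^2 - C (c^3 - c^2 - c) * N₁ c * D₁ c - C (c^2) * (D₁ c)^2

/-- The second dynatomic polynomial `Φ₂ = (X·D₂ − N₂)/(X·D₁ − N₁)` of `φ_c`. -/
def dyn2 (c : ℚ) : ℚ[X] := (X * D₂ c - N₂ c) / (X * D₁ c - N₁ c)

/-- The explicit quotient: `dyn2 c` as an honest quadratic. -/
def Qd (c : ℚ) : ℚ[X] :=
  C (-(c^2) * (c^3 - c^2 - c + 1)) * X^2 + C (c^2*(c^2-1)*(c^2-2)) * X + C (c^3*(c^2-1))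

lemma keyfac (c : ℚ) : X * D₂ c - N₂ c = (X * D₁ c - N₁ c) * Qd c := by
  unfold N₂ D₂ N₁ D₁ Qd
  simp only [map_sub, map_add, map_mul, map_pow, map_neg, map_one, map_ofNat]
  ring

lemma Gne (c : ℚ) (hc0 : c ≠ 0) : (X * D₁ c - N₁ c) ≠ 0 := by
  intro h
  have := congrArg (eval 0) h
  simp [N₁, D₁] at this
  exact hc0 this

lemma dyn2_eq (c : ℚ) (hc0 : c ≠ 0) : dyn2 c = Qd c :=
  (EuclideanDomain.eq_div_of_mul_eq_right (Gne c hc0) (keyfac c).symm).symm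

/-- The key scalar fact: an exact 2-periodic finite point is a root of the quadratic. -/
lemma root_of_mem (c x : ℚ) (hc0 : c ≠ 0)
    (h2 : (phiC4 c)^[2] (some x) = some x) (h1 : phiC4 c (some x) ≠ some x) :
    -(c^2) * (c^3 - c^2 - c + 1) * x^2 + (c^2*(c^2-1)*(c^2-2)) * x + c^3*(c^2-1) = 0 := by
  have hit : (phiC4 c)^[2] (some x) = phiC4 c (phiC4 c (some x)) := rfl
  set d1 : ℚ := (c^3 - c^2 - c + 1)*x^2 - (c^3 - c^2 - c)*x - c^2 with hd1
  set n1 : ℚ := (c + c^2 - c^3)*x - c^2 with hn1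
  have hd1ne : d1 ≠ 0 := by
    intro h0
    have hφ : phiC4 c (some x) = none := by
      rw [phiC4]; exact if_pos h0
    rw [hit, hφ] at h2
    have hx0 : x = 0 := by
      have : phiC4 c none = some 0 := rfl
      rw [this] at h2
      exact (Option.some_inj.1 h2).symm
    rw [hd1, hx0] at h0
    norm_num at h0
    exact hc0 h0
  have hφ1 : phiC4 c (some x) = some (n1 / d1) := by
    rw [phiC4]; exact if_neg hd1ne
  set y : ℚ := n1 / d1 with hy
  have hny : n1 = y * d1 := by rw [hy, div_mul_cancel₀ _ hd1ne]
  -- denominator at y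
  set d2 : ℚ := (c^3 - c^2 - c + 1)*n1^2 - (c^3 - c^2 - c)*n1*d1 - c^2*d1^2 with hd2
  have hdy : (c^3 - c^2 - c + 1)*y^2 - (c^3 - c^2 - c)*y - c^2 = d2 / d1^2 := by
    rw [eq_div_iff (pow_ne_zero 2 hd1ne), hd2, hny]
    ring
  have hd2ne : d2 ≠ 0 := by
    intro h0
    have hφ2 : phiC4 c (some y) = none := by
      rw [phiC4]
      rw [if_pos (by rw [hdy, h0, zero_div])]
    rw [hit, hφ1, hφ2] at h2
    cases h2
  have hφ2 : phiC4 c (some y) =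
      some (((c + c^2 - c^3)*y - c^2) / ((c^3 - c^2 - c + 1)*y^2 - (c^3 - c^2 - c)*y - c^2)) := by
    rw [phiC4]
    exact if_neg (by rw [hdy]; exact div_ne_zero hd2ne (pow_ne_zero _ hd1ne))
  rw [hit, hφ1, hφ2] at h2
  have hval : ((c + c^2 - c^3)*y - c^2) / ((c^3 - c^2 - c + 1)*y^2 - (c^3 - c^2 - c)*y - c^2)
      = x := Option.some_inj.1 h2
  rw [hdy] at hval
  have hd2' : (c + c^2 - c^3)*y - c^2 = x * (d2 / d1^2) := by
    rw [← hval]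
    field_simp
  -- clear denominators: d1 * ((c+c²-c³) n1 - c² d1) = x * d2
  have hkey : d1 * ((c + c^2 - c^3)*n1 - c^2*d1) = x * d2 := by
    have h3 : ((c + c^2 - c^3)*y - c^2) * d1^2 = x * d2 := by
      rw [hd2', mul_assoc, div_mul_cancel₀ _ (pow_ne_zero 2 hd1ne)]
    linear_combination h3 + (c + c^2 - c^3) * d1 * hny
  -- φ(x) ≠ x : n1 ≠ x * d1
  have hne : x * d1 - n1 ≠ 0 := by
    intro h0
    apply h1
    rw [hφ1]
    have hn1x : n1 = x * d1 := by linarith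
    congr 1
    rw [hy, hn1x]
    exact mul_div_cancel_right₀ x hd1ne
  -- the factorization identity over ℚ
  have hfac : x * d2 - d1 * ((c + c^2 - c^3)*n1 - c^2*d1)
      = (x * d1 - n1) *
        (-(c^2) * (c^3 - c^2 - c + 1) * x^2 + (c^2*(c^2-1)*(c^2-2)) * x + c^3*(c^2-1)) := by
    rw [hd1, hn1, hd2]
    ring
  have : (x * d1 - n1) *
      (-(c^2) * (c^3 - c^2 - c + 1) * x^2 + (c^2*(c^2-1)*(c^2-2)) * x + c^3*(c^2-1)) = 0 := by
    rw [← hfac, hkey]; ring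
  rcases mul_eq_zero.1 this with h | h
  · exact absurd h hne
  · exact h

/-- Forward invariance of the exact-period-2 set. -/
lemma phi_mem (c : ℚ) (P : Option ℚ)
    (h2 : (phiC4 c)^[2] P = P) (h1 : phiC4 c P ≠ P) :
    (phiC4 c)^[2] (phiC4 c P) = phiC4 c P ∧ phiC4 c (phiC4 c P) ≠ phiC4 c P := by
  have hit : ∀ Q, (phiC4 c)^[2] Q = phiC4 c (phiC4 c Q) := fun _ => rfl
  rw [hit] at h2
  constructor
  · rw [hit, h2]
  · rw [h2]
    exact fun h => h1 h.symm

/-- For `c ∉ {0, ±1}`, the second dynatomic polynomial of `φ_c` is a quadratic with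
nonzero discriminant; consequently `φ_c` has either zero or exactly two rational points
of exact period 2 (so if it has one it has exactly two). -/
theorem stmt_19 (c : ℚ) (hc0 : c ≠ 0) (hc1 : c ≠ 1) (hcm1 : c ≠ -1) :
    (X * D₁ c - N₁ c) ∣ (X * D₂ c - N₂ c) ∧
    (dyn2 c).natDegree = 2 ∧
    (dyn2 c).coeff 1 ^ 2 - 4 * (dyn2 c).coeff 2 * (dyn2 c).coeff 0 ≠ 0 ∧
    ({P : Option ℚ | (phiC4 c)^[2] P = P ∧ phiC4 c P ≠ P} = (∅ : Set (Option ℚ)) ∨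
      ∃ P₁ P₂ : Option ℚ, P₁ ≠ P₂ ∧
        {P : Option ℚ | (phiC4 c)^[2] P = P ∧ phiC4 c P ≠ P} = {P₁, P₂}) := by
  have hA : c^3 - c^2 - c + 1 ≠ 0 := by
    have h : c^3 - c^2 - c + 1 = (c-1)^2*(c+1) := by ring
    rw [h]
    exact mul_ne_zero (pow_ne_zero _ (sub_ne_zero.2 hc1))
      (fun h0 => hcm1 (by linarith))
  have hq2 : -(c^2) * (c^3 - c^2 - c + 1) ≠ 0 :=
    mul_ne_zero (neg_ne_zero.2 (pow_ne_zero _ hc0)) hA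
  have hdyn : dyn2 c = Qd c := dyn2_eq c hc0
  have hcoeff2 : (dyn2 c).coeff 2 = -(c^2) * (c^3 - c^2 - c + 1) := by
    rw [hdyn, Qd]
    simp only [coeff_add, coeff_C_mul, coeff_X_pow, coeff_X, coeff_C]
    norm_num
  have hcoeff1 : (dyn2 c).coeff 1 = c^2*(c^2-1)*(c^2-2) := by
    rw [hdyn, Qd]
    simp only [coeff_add, coeff_C_mul, coeff_X_pow, coeff_X, coeff_C]
    norm_num
  have hcoeff0 : (dyn2 c).coeff 0 = c^3*(c^2-1) := by
    rw [hdyn, Qd]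
    simp only [coeff_add, coeff_C_mul, coeff_X_pow, coeff_X, coeff_C]
    norm_num
  refine ⟨⟨Qd c, keyfac c⟩, ?_, ?_, ?_⟩
  · rw [hdyn, Qd]
    exact natDegree_quadratic hq2
  · rw [hcoeff2, hcoeff1, hcoeff0]
    have hfac : (c^2*(c^2-1)*(c^2-2))^2 - 4 * (-(c^2) * (c^3 - c^2 - c + 1)) * (c^3*(c^2-1))
        = c^4*(c-1)^2*(c+1)^2*((c^2-1)^2 + 2*(c-1)^2 + 1) := by ring
    rw [hfac]
    have hpos : (c^2-1)^2 + 2*(c-1)^2 + 1 > 0 := by positivity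
    exact mul_ne_zero (mul_ne_zero (mul_ne_zero (pow_ne_zero _ hc0)
      (pow_ne_zero _ (sub_ne_zero.2 hc1)))
      (pow_ne_zero _ (fun h0 => hcm1 (by linarith)))) (ne_of_gt hpos)
  · -- the set part
    set S := {P : Option ℚ | (phiC4 c)^[2] P = P ∧ phiC4 c P ≠ P} with hS
    by_cases hempty : S = ∅
    · exact Or.inl hempty
    · right
      obtain ⟨P, hP⟩ := Set.nonempty_iff_ne_empty.2 hempty
      obtain ⟨hP2, hP1⟩ := hP
      -- P must be finite
      have hfin : ∀ Q ∈ S, ∃ z : ℚ, Q = some z := by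
        rintro (_ | z) ⟨hQ2, hQ1⟩
        · exfalso
          have : (phiC4 c)^[2] none = some 1 := by
            have h0 : phiC4 c none = some 0 := rfl
            have hd0 : (c^3 - c^2 - c + 1)*(0:ℚ)^2 - (c^3 - c^2 - c)*0 - c^2 ≠ 0 := by
              simpa using pow_ne_zero 2 hc0
            have h1 : phiC4 c (some 0) = some 1 := by
              rw [phiC4, if_neg hd0]
              congr 1
              field_simp
              ring
            show phiC4 c (phiC4 c none) = some 1
            rw [h0, h1]
          rw [this] at hQ2
          cases hQ2
        · exact ⟨z, rfl⟩
      obtain ⟨x, rfl⟩ := hfin P ⟨hP2, hP1⟩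
      refine ⟨some x, phiC4 c (some x), fun h => hP1 h.symm, ?_⟩
      have hmemy : phiC4 c (some x) ∈ S := phi_mem c _ hP2 hP1
      obtain ⟨y, hys⟩ := hfin _ hmemy
      apply Set.eq_of_subset_of_subset
      · -- S ⊆ {some x, φ(some x)}
        intro Q hQ
        obtain ⟨z, rfl⟩ := hfin Q hQ
        have hqz := root_of_mem c z hc0 hQ.1 hQ.2
        have hqx := root_of_mem c x hc0 hP2 hP1
        rw [hys] at hmemy ⊢
        have hqy := root_of_mem c y hc0 hmemy.1 hmemy.2
        have hxy : x ≠ y := by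
          intro h
          apply hP1
          rw [hys, h]
        -- quadratic has at most two roots
        set a := -(c^2) * (c^3 - c^2 - c + 1) with ha
        set b := c^2*(c^2-1)*(c^2-2) with hb
        set d := c^3*(c^2-1) with hd
        have hsum : a*(x+y) + b = 0 := by
          have h := sub_ne_zero.2 hxy
          have hfac : (x - y) * (a*(x+y) + b) = 0 := by linear_combination hqx - hqy
          rcases mul_eq_zero.1 hfac with h' | h'
          · exact absurd h' h
          · exact h'
        have hprod : d - a*(x*y) = 0 := by linear_combination hqx - x*hsum
        have hz : a * ((z-x)*(z-y)) = 0 := by linear_combination hqz - z*hsum - hprod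
        have := (mul_eq_zero.1 hz).resolve_left hq2
        rcases mul_eq_zero.1 this with h' | h'
        · left; rw [sub_eq_zero.1 h']
        · right; rw [sub_eq_zero.1 h']; exact rfl
      · intro Q hQ
        rcases hQ with h | h
        · rw [h]; exact ⟨hP2, hP1⟩
        · rw [Set.mem_singleton_iff.1 h]; exact hmemy

end
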